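/- arXiv:1208.1002 — 3 statements merged into one kernel-verified Lean document; each statement's English description precedes it below -/
import Mathlib

section
/- Let G be a countable group and {F_n} a sequence of finite subsets of G each containing the identity. If {F_n} does not satisfy the Besicovitch covering property, then for every k there exists an incremental sequence of translates (F_{n(i)}·g_i)_{i=1}^k of multiplicity at least k, i.e., there exist indices n(1) ≥ n(2) ≥ … ≥ n(k) and group elements g_1, …, g_k with g_j ∉ ⋃_{i<j} F_{n(i)}g_i, such that some point of G lies in at least k of the sets F_{n(i)}g_i. -/
open Finset Pointwise

/-- The Besicovitch covering property for a sequence of finite subsets of a group: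
there is a constant `C` such that for every finite `A ⊆ G` and every assignment
`g ↦ ν g`, some subset `A' ⊆ A` is such that the right-translates `F (ν g) * g`,
`g ∈ A'`, cover `A` with multiplicity at most `C`. -/
def IsBesicovitch {G : Type*} [Group G] [DecidableEq G] (F : ℕ → Finset G) : Prop :=
  ∃ C : ℕ, ∀ (A : Finset G) (ν : G → ℕ), ∃ A' ⊆ A,
    (∀ a ∈ A, ∃ g ∈ A', a ∈ (F (ν g)).image (· * g)) ∧
    ∀ h : G, (A'.filter (fun g => h ∈ (F (ν g)).image (· * g))).card ≤ C

/-- Greedy selection: from any finite set `A` one can select an incremental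
sequence of translates covering `A`, always choosing a point with maximal `ν`. -/
lemma besicovitch_greedy {G : Type*} [Group G] [DecidableEq G] (F : ℕ → Finset G)
    (hone : ∀ m, (1 : G) ∈ F m) :
    ∀ (N : ℕ) (A : Finset G), A.card ≤ N → ∀ ν : G → ℕ,
    ∃ (m : ℕ) (n : Fin m → ℕ) (g : Fin m → G),
      (∀ i, g i ∈ A) ∧ (∀ i, n i = ν (g i)) ∧
      (∀ i j : Fin m, i ≤ j → n j ≤ n i) ∧
      (∀ j i : Fin m, i < j → g j ∉ (F (n i)).image (· * g i)) ∧
      (∀ a ∈ A, ∃ i, a ∈ (F (n i)).image (· * g i)) := by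
  intro N
  induction N with
  | zero =>
    intro A hA ν
    have : A = ∅ := Finset.card_eq_zero.mp (Nat.le_zero.mp hA)
    subst this
    exact ⟨0, Fin.elim0, Fin.elim0, fun i => i.elim0, fun i => i.elim0,
      fun i => i.elim0, fun j => j.elim0, fun a ha => absurd ha (Finset.notMem_empty a)⟩
  | succ N ih =>
    intro A hA ν
    rcases A.eq_empty_or_nonempty with rfl | hne
    · exact ⟨0, Fin.elim0, Fin.elim0, fun i => i.elim0, fun i => i.elim0,
        fun i => i.elim0, fun j => j.elim0, fun a ha => absurd ha (Finset.notMem_empty a)⟩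
    · obtain ⟨a, haA, hamax⟩ := Finset.exists_max_image A ν hne
      set B := A \ (F (ν a)).image (· * a) with hB
      have hBsub : B ⊆ A := Finset.sdiff_subset
      have haB : a ∉ B := by
        simp only [hB, Finset.mem_sdiff, not_and, not_not]
        intro _
        exact Finset.mem_image.mpr ⟨1, by simpa using hone (ν a)⟩
      have hBcard : B.card ≤ N := by
        have : B.card < A.card :=
          Finset.card_lt_card ⟨hBsub, fun hsub => haB (hsub haA)⟩
        omega
      obtain ⟨m, n, g, hmem, hν, hanti, hinc, hcov⟩ := ih B hBcard ν
      refine ⟨m + 1, Fin.cons (ν a) n, Fin.cons a g, ?_, ?_, ?_, ?_, ?_⟩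
      · intro i
        induction i using Fin.cases with
        | zero => simpa using haA
        | succ i => simpa using hBsub (hmem i)
      · intro i
        induction i using Fin.cases with
        | zero => simp
        | succ i => simpa using hν i
      · intro i j hij
        induction i using Fin.cases with
        | zero =>
          induction j using Fin.cases with
          | zero => simp
          | succ j =>
            simp only [Fin.cons_succ, Fin.cons_zero]
            rw [hν j]
            exact hamax _ (hBsub (hmem j))
        | succ i =>
          induction j using Fin.cases with
          | zero => exact absurd hij (by simp [Fin.le_def])
          | succ j =>
            simp only [Fin.cons_succ]
            exact hanti i j (by simpa [Fin.succ_le_succ_iff] using hij)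
      · intro j i hij
        induction i using Fin.cases with
        | zero =>
          induction j using Fin.cases with
          | zero => exact absurd hij (lt_irrefl _)
          | succ j =>
            simp only [Fin.cons_succ, Fin.cons_zero]
            have := hmem j
            rw [hB, Finset.mem_sdiff] at this
            exact this.2
        | succ i =>
          induction j using Fin.cases with
          | zero => exact absurd hij (by simp [Fin.lt_def])
          | succ j =>
            simp only [Fin.cons_succ]
            exact hinc j i (by simpa [Fin.succ_lt_succ_iff] using hij)
      · intro a' ha'
        by_cases hin : a' ∈ (F (ν a)).image (· * a)
        · exact ⟨0, by simpa using hin⟩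
        · have : a' ∈ B := Finset.mem_sdiff.mpr ⟨ha', hin⟩
          obtain ⟨i, hi⟩ := hcov a' this
          exact ⟨i.succ, by simpa using hi⟩

/-- If `{F n}` (finite sets containing the identity in a countable group) is not
Besicovitch, then for every `k` there is an incremental sequence of translates
`F (n i) * g i`, `i = 1, …, k`, of multiplicity at least `k`. -/
theorem besicovitch_fails_implies_high_multiplicity_incremental
    {G : Type*} [Group G] [Countable G] [DecidableEq G]
    (F : ℕ → Finset G) (hone : ∀ m, (1 : G) ∈ F m)
    (hB : ¬ IsBesicovitch F) :
    ∀ k : ℕ, ∃ (n : Fin k → ℕ) (g : Fin k → G),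
      (∀ i j : Fin k, i ≤ j → n j ≤ n i) ∧
      (∀ j i : Fin k, i < j → g j ∉ (F (n i)).image (· * g i)) ∧
      ∃ h : G, ∀ i : Fin k, h ∈ (F (n i)).image (· * g i) := by
  intro k
  rw [IsBesicovitch] at hB
  push_neg at hB
  obtain ⟨A, ν, hAν⟩ := hB k
  obtain ⟨m, n, g, hmem, hν, hanti, hinc, hcov⟩ :=
    besicovitch_greedy F hone A.card A le_rfl ν
  -- g is injective
  have hginj : Function.Injective g := by
    intro i j hij
    by_contra hne
    rcases lt_or_gt_of_ne hne with h | h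
    · exact hinc j i h (Finset.mem_image.mpr ⟨1, hone _, by simp [hij]⟩)
    · exact hinc i j h (Finset.mem_image.mpr ⟨1, hone _, by simp [hij]⟩)
  set A' : Finset G := Finset.image g Finset.univ with hA'
  have hA'sub : A' ⊆ A := by
    intro x hx
    obtain ⟨i, _, rfl⟩ := Finset.mem_image.mp hx
    exact hmem i
  have hcover : ∀ a ∈ A, ∃ g' ∈ A', a ∈ (F (ν g')).image (· * g') := by
    intro a ha
    obtain ⟨i, hi⟩ := hcov a ha
    exact ⟨g i, Finset.mem_image.mpr ⟨i, Finset.mem_univ i, rfl⟩, by rwa [← hν i]⟩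
  obtain ⟨h, hh⟩ := (hAν A' hA'sub hcover)
  set T : Finset (Fin m) :=
    Finset.univ.filter (fun i => h ∈ (F (n i)).image (· * g i)) with hT
  have hsub : (A'.filter (fun g' => h ∈ (F (ν g')).image (· * g'))) ⊆ T.image g := by
    intro x hx
    rw [Finset.mem_filter] at hx
    obtain ⟨i, _, rfl⟩ := Finset.mem_image.mp hx.1
    refine Finset.mem_image.mpr ⟨i, ?_, rfl⟩
    rw [hT, Finset.mem_filter]
    exact ⟨Finset.mem_univ i, by rw [hν i]; exact hx.2⟩
  have hTcard : k ≤ T.card := le_of_lt <| by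
    calc k < (A'.filter (fun g' => h ∈ (F (ν g')).image (· * g'))).card := hh
    _ ≤ (T.image g).card := Finset.card_le_card hsub
    _ ≤ T.card := Finset.card_image_le
  set e := T.orderEmbOfCardLe hTcard with he
  have heT : ∀ i, e i ∈ T := fun i => T.orderEmbOfCardLe_mem hTcard i
  refine ⟨fun i => n (e i), fun i => g (e i), ?_, ?_, h, ?_⟩
  · intro i j hij
    exact hanti (e i) (e j) (e.monotone hij)
  · intro j i hij
    exact hinc (e j) (e i) (e.strictMono hij)
  · intro i
    have := heT i
    rw [hT, Finset.mem_filter] at this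
    exact this.2
end

section
/- Let G be a countable group and {F_n} a sequence of finite, symmetric subsets of G, each containing the identity, with F_1 ⊆ F_2 ⊆ …. If for every k there exists an incremental sequence (F_{n(i)}g_i)_{i=1}^k of multiplicity at least k, then {F_n} does not satisfy the Besicovitch covering property. -/
open Finset Pointwise

/-- If `{F n}` are finite, symmetric, increasing sets containing the identity in a
countable group, and for every `k` there is an incremental sequence of translates of
multiplicity at least `k`, then `{F n}` is not Besicovitch. -/
theorem high_multiplicity_incremental_implies_not_besicovitch
    {G : Type*} [Group G] [Countable G] [DecidableEq G]
    (F : ℕ → Finset G) (hone : ∀ m, (1 : G) ∈ F m)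
    (hsym : ∀ m, ∀ x ∈ F m, x⁻¹ ∈ F m)
    (hmono : Monotone F)
    (hinc : ∀ k : ℕ, ∃ (n : Fin k → ℕ) (g : Fin k → G),
      (∀ i j : Fin k, i ≤ j → n j ≤ n i) ∧
      (∀ j i : Fin k, i < j → g j ∉ (F (n i)).image (· * g i)) ∧
      ∃ h : G, ∀ i : Fin k, h ∈ (F (n i)).image (· * g i)) :
    ¬ IsBesicovitch F := by
  classical
  rintro ⟨C, hC⟩
  obtain ⟨n, g, hn, hg, h, hh⟩ := hinc (C + 1)
  -- g is injective
  have hinj : Function.Injective g := by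
    intro i j hij
    by_contra hne
    rcases lt_or_gt_of_ne hne with hlt | hlt
    · exact hg j i hlt (by
        rw [← hij]
        exact Finset.mem_image.mpr ⟨1, hone _, one_mul _⟩)
    · exact hg i j hlt (by
        rw [hij]
        exact Finset.mem_image.mpr ⟨1, hone _, one_mul _⟩)
  set A : Finset G := Finset.univ.image g with hA
  set ν : G → ℕ := fun x => if hx : ∃ i, g i = x then n hx.choose else 0 with hνdef
  have hν : ∀ i, ν (g i) = n i := by
    intro i
    have hx : ∃ i', g i' = g i := ⟨i, rfl⟩
    simp only [hνdef, dif_pos hx]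
    rw [hinj hx.choose_spec]
  obtain ⟨A', hA'sub, hcover, hbound⟩ := hC A ν
  -- every g j ∈ A'
  have hall : ∀ j, g j ∈ A' := by
    intro j
    obtain ⟨g', hg'A', hg'cov⟩ := hcover (g j) (Finset.mem_image.mpr ⟨j, Finset.mem_univ _, rfl⟩)
    obtain ⟨i, _, rfl⟩ := Finset.mem_image.mp (hA'sub hg'A')
    rw [hν i] at hg'cov
    rcases lt_trichotomy i j with hlt | heq | hlt
    · exact absurd hg'cov (hg j i hlt)
    · rwa [heq] at hg'A'
    · -- j < i : use symmetry + monotonicity to contradict hg i j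
      exfalso
      obtain ⟨x, hx, hxe⟩ := Finset.mem_image.mp hg'cov
      apply hg i j hlt
      refine Finset.mem_image.mpr ⟨x⁻¹, hmono (hn j i hlt.le) (hsym _ x hx), ?_⟩
      rw [← hxe]
      group
  -- now multiplicity at h exceeds C
  have hsubset : A ⊆ A'.filter (fun x => h ∈ (F (ν x)).image (· * x)) := by
    intro x hx
    obtain ⟨i, _, rfl⟩ := Finset.mem_image.mp hx
    refine Finset.mem_filter.mpr ⟨hall i, ?_⟩
    rw [hν i]; exact hh i
  have hcard : A.card = C + 1 := by
    rw [hA, Finset.card_image_of_injective _ hinj, Finset.card_univ, Fintype.card_fin]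
  have := Finset.card_le_card hsubset
  rw [hcard] at this
  exact absurd (le_trans this (hbound h)) (by omega)
end

section
/- Let G be a finitely generated group whose balls satisfy c_1 n^c ≤ |B_n| ≤ c_2 n^c for constants c_1, c_2, c > 0. Then there is a constant C (depending only on c_1, c_2, c) such that for all k, N ≥ 1: any incremental sequence (B_{r(i)}g_i)_{i=1}^k with radii r(i) ∈ [N, 2N] has multiplicity at most C. -/
open Finset Pointwise

lemma inv_mem_pow_of_symm {G : Type} [Group G] [DecidableEq G] {A : Finset G}
    (hsym : ∀ x ∈ A, x⁻¹ ∈ A) :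
    ∀ n, ∀ a ∈ A ^ n, a⁻¹ ∈ A ^ n := by
  intro n
  induction n with
  | zero => simp
  | succ n ih =>
    intro a ha
    rw [pow_succ] at ha
    rw [pow_succ']
    obtain ⟨b, hb, c, hc, rfl⟩ := Finset.mem_mul.1 ha
    rw [mul_inv_rev]
    exact Finset.mul_mem_mul (hsym c hc) (ih b hb)

/-- In a finitely generated group of exact polynomial growth
`c₁ n^c ≤ |B n| ≤ c₂ n^c`, there is a constant `C` depending only on `c₁, c₂, c`
such that any incremental sequence of balls `B (r i) * g i` with radii
`r i ∈ [N, 2N]` has multiplicity at most `C`. -/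
theorem bounded_radius_incremental_multiplicity
    (c₁ c₂ : ℝ) (c : ℕ) (hc₁ : 0 < c₁) (hc₂ : 0 < c₂) (hc : 0 < c) :
    ∃ C : ℕ, ∀ (G : Type) [Group G] [DecidableEq G] (A : Finset G),
      (∀ x ∈ A, x⁻¹ ∈ A) → (1 : G) ∈ A →
      (∀ n : ℕ, 1 ≤ n → c₁ * (n : ℝ) ^ c ≤ ((A ^ n).card : ℝ) ∧
        ((A ^ n).card : ℝ) ≤ c₂ * (n : ℝ) ^ c) →
      ∀ (k N : ℕ), 1 ≤ k → 1 ≤ N →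
      ∀ (r : Fin k → ℕ) (g : Fin k → G),
        (∀ i, N ≤ r i ∧ r i ≤ 2 * N) →
        (∀ i j : Fin k, i ≤ j → r j ≤ r i) →
        (∀ j i : Fin k, i < j → g j ∉ (A ^ (r i)).image (· * g i)) →
        ∀ h : G,
          (Finset.univ.filter (fun i : Fin k => h ∈ (A ^ (r i)).image (· * g i))).card ≤ C := by
  refine ⟨⌈c₂ * 3 ^ c + c₂ / c₁ * 12 ^ c⌉₊, ?_⟩
  intro G _ _ A hsym hone hgrowth k N hk hN r g hrange hmono hinc h
  set S := Finset.univ.filter (fun i : Fin k => h ∈ (A ^ (r i)).image (· * g i)) with hS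
  set H : Fin k → Finset G := fun i => (A ^ (r i / 2)).image (· * g i) with hH
  -- pairwise disjoint half-balls
  have hdisj : ∀ i j : Fin k, i ≠ j → Disjoint (H i) (H j) := by
    have key : ∀ i j : Fin k, i < j → Disjoint (H i) (H j) := by
      intro i j hij
      rw [Finset.disjoint_left]
      rintro x hx hx'
      obtain ⟨a, ha, rfl⟩ := Finset.mem_image.1 hx
      obtain ⟨b, hb, hba⟩ := Finset.mem_image.1 hx'
      apply hinc j i hij
      refine Finset.mem_image.2 ⟨b⁻¹ * a, ?_, by
        rw [mul_assoc, ← hba, inv_mul_cancel_left]⟩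
      have hbinv : b⁻¹ ∈ A ^ (r j / 2) := inv_mem_pow_of_symm hsym _ b hb
      have hmem : b⁻¹ * a ∈ A ^ (r j / 2) * A ^ (r i / 2) := Finset.mul_mem_mul hbinv ha
      rw [← pow_add] at hmem
      exact Finset.pow_subset_pow_right hone
        (by have := hmono i j hij.le; omega) hmem
    intro i j hij
    rcases lt_or_gt_of_ne hij with hlt | hgt
    · exact key i j hlt
    · exact (key j i hgt).symm
  -- half-balls of elements of S lie in the ball of radius 3N around h
  have hsub : ∀ i ∈ S, H i ⊆ (A ^ (3 * N)).image (· * h) := by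
    intro i hi
    obtain ⟨b, hb, hbh⟩ := Finset.mem_image.1 ((Finset.mem_filter.1 hi).2)
    intro x hx
    obtain ⟨a, ha, rfl⟩ := Finset.mem_image.1 hx
    refine Finset.mem_image.2 ⟨a * b⁻¹, ?_, ?_⟩
    · have ha' : a ∈ A ^ N :=
        Finset.pow_subset_pow_right hone (by have := (hrange i).2; omega) ha
      have hb' : b⁻¹ ∈ A ^ (2 * N) :=
        Finset.pow_subset_pow_right hone (hrange i).2 (inv_mem_pow_of_symm hsym _ b hb)
      have : a * b⁻¹ ∈ A ^ N * A ^ (2 * N) := Finset.mul_mem_mul ha' hb'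
      rwa [← pow_add, show N + 2 * N = 3 * N by ring] at this
    · rw [← hbh]; group
  -- counting
  have hLcard : ∀ i ∈ S, (A ^ (N / 2)).card ≤ (H i).card := by
    intro i _
    rw [hH]
    rw [Finset.card_image_of_injective _ (mul_left_injective (g i))]
    exact Finset.card_le_card
      (Finset.pow_subset_pow_right hone (Nat.div_le_div_right (hrange i).1))
  have h1 : S.card * (A ^ (N / 2)).card ≤ ∑ i ∈ S, (H i).card := by
    simpa using Finset.card_nsmul_le_sum S _ _ hLcard
  have h2 : ∑ i ∈ S, (H i).card = (S.biUnion H).card :=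
    (Finset.card_biUnion (fun i _ j _ hij => hdisj i j hij)).symm
  have h3 : (S.biUnion H).card ≤ (A ^ (3 * N)).card := by
    calc (S.biUnion H).card ≤ ((A ^ (3 * N)).image (· * h)).card :=
          Finset.card_le_card (Finset.biUnion_subset.2 hsub)
      _ = (A ^ (3 * N)).card :=
          Finset.card_image_of_injective _ (mul_left_injective h)
  have hkey : S.card * (A ^ (N / 2)).card ≤ (A ^ (3 * N)).card := by omega
  -- real arithmetic
  have hT : ((A ^ (3 * N)).card : ℝ) ≤ c₂ * (3 * (N : ℝ)) ^ c := by
    have := (hgrowth (3 * N) (by omega)).2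
    push_cast at this
    convert this using 3 <;> push_cast <;> ring
  have hkeyR : (S.card : ℝ) * ((A ^ (N / 2)).card : ℝ) ≤ c₂ * (3 * (N : ℝ)) ^ c := by
    calc (S.card : ℝ) * ((A ^ (N / 2)).card : ℝ)
        = ((S.card * (A ^ (N / 2)).card : ℕ) : ℝ) := by push_cast; ring
      _ ≤ ((A ^ (3 * N)).card : ℝ) := Nat.cast_le.2 hkey
      _ ≤ _ := hT
  have hfinal : (S.card : ℝ) ≤ c₂ * 3 ^ c + c₂ / c₁ * 12 ^ c := by
    rcases eq_or_lt_of_le hN with hN1 | hN2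
    · -- N = 1
      have hNe : N = 1 := hN1.symm
      have hL1 : ((A ^ (N / 2)).card : ℝ) = 1 := by
        subst hNe; norm_num
      have : (S.card : ℝ) ≤ c₂ * 3 ^ c := by
        rw [hL1, mul_one] at hkeyR
        calc (S.card : ℝ) ≤ c₂ * (3 * (N : ℝ)) ^ c := hkeyR
          _ = c₂ * 3 ^ c := by subst hNe; norm_num
      have hpos : 0 < c₂ / c₁ * 12 ^ c := by positivity
      linarith
    · -- N ≥ 2
      have hN2' : 2 ≤ N := hN2
      have hL : c₁ * ((N : ℝ) / 4) ^ c ≤ ((A ^ (N / 2)).card : ℝ) := by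
        have hhalf := (hgrowth (N / 2) (by omega)).1
        have h4 : (N : ℝ) / 4 ≤ ((N / 2 : ℕ) : ℝ) := by
          have hn : N ≤ 4 * (N / 2) := by omega
          have := (Nat.cast_le (α := ℝ)).2 hn
          push_cast at this
          linarith
        have := pow_le_pow_left₀ (by positivity) h4 c
        nlinarith
      have hDpos : 0 < c₁ * ((N : ℝ) / 4) ^ c := by
        have : (0 : ℝ) < (N : ℝ) / 4 := by
          have : (0 : ℝ) < (N : ℝ) := by exact_mod_cast Nat.lt_of_lt_of_le Nat.zero_lt_one hN
          linarith
        positivity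
      have hmul : (S.card : ℝ) * (c₁ * ((N : ℝ) / 4) ^ c) ≤
          (c₂ / c₁ * 12 ^ c) * (c₁ * ((N : ℝ) / 4) ^ c) := by
        have heq : (c₂ / c₁ * 12 ^ c) * (c₁ * ((N : ℝ) / 4) ^ c) = c₂ * (3 * (N : ℝ)) ^ c := by
          have harg : (3 * (N : ℝ)) = 12 * ((N : ℝ) / 4) := by ring
          rw [harg, mul_pow]
          field_simp
        rw [heq]
        calc (S.card : ℝ) * (c₁ * ((N : ℝ) / 4) ^ c)
            ≤ (S.card : ℝ) * ((A ^ (N / 2)).card : ℝ) := by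
              apply mul_le_mul_of_nonneg_left hL (by positivity)
          _ ≤ c₂ * (3 * (N : ℝ)) ^ c := hkeyR
      have := le_of_mul_le_mul_right hmul hDpos
      have hpos : 0 < c₂ * 3 ^ c := by positivity
      linarith
  calc S.card ≤ ⌈(S.card : ℝ)⌉₊ := by simp
    _ ≤ ⌈c₂ * 3 ^ c + c₂ / c₁ * 12 ^ c⌉₊ := Nat.ceil_le_ceil hfinal
end
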